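/- For every j ∈ {1,...,M}, the stopping set Γ^{(j)} = {π ∈ S^M : V₀(π) = h_j(π) = h(π)} is closed and convex, and Γ^{(j)} = ∩_{N≥1} Γ_N^{(j)} where Γ_N^{(j)} = {π ∈ S^M : V₀^N(π) = h_j(π) = h(π)} form a decreasing sequence of closed convex sets. -/

import Mathlib

open MeasureTheory Filter

/-- `h_j(π) = Σ_{i=0}^M π_i a_{ij}`. -/
def hj {M : ℕ} (a : Fin (M + 1) → Fin (M + 1) → ℝ) (j : Fin (M + 1))
    (π : Fin (M + 1) → ℝ) : ℝ :=
  ∑ i : Fin (M + 1), π i * a i j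

/-- `h(π) = min_{j ∈ {1,…,M}} h_j(π)`. -/
noncomputable def hfun {M : ℕ} (a : Fin (M + 1) → Fin (M + 1) → ℝ)
    (π : Fin (M + 1) → ℝ) : ℝ :=
  ⨅ j : {j : Fin (M + 1) // j ≠ 0}, hj a (j : Fin (M + 1)) π

lemma hj_affine {M : ℕ} (a : Fin (M + 1) → Fin (M + 1) → ℝ) (j : Fin (M + 1))
    (x y : Fin (M + 1) → ℝ) (s t : ℝ) :
    hj a j (s • x + t • y) = s * hj a j x + t * hj a j y := by
  simp only [hj, Pi.add_apply, Pi.smul_apply, smul_eq_mul, add_mul, mul_assoc,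
    Finset.sum_add_distrib, Finset.mul_sum]

lemma continuous_hj {M : ℕ} (a : Fin (M + 1) → Fin (M + 1) → ℝ) (j : Fin (M + 1)) :
    Continuous (hj a j) :=
  continuous_finset_sum _ fun i _ => (continuous_apply i).mul continuous_const

lemma hfun_le {M : ℕ} (hM : 0 < M) (a : Fin (M + 1) → Fin (M + 1) → ℝ)
    {j : Fin (M + 1)} (hjne : j ≠ 0) (π : Fin (M + 1) → ℝ) :
    hfun a π ≤ hj a j π := by
  haveI : Nonempty {j : Fin (M + 1) // j ≠ 0} := ⟨⟨j, hjne⟩⟩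
  exact ciInf_le (Set.Finite.bddBelow (Set.finite_range
    (fun k : {j : Fin (M + 1) // j ≠ 0} => hj a (k : Fin (M + 1)) π))) ⟨j, hjne⟩

lemma continuous_hfun {M : ℕ} (hM : 0 < M) (a : Fin (M + 1) → Fin (M + 1) → ℝ) :
    Continuous (hfun a) := by
  haveI : Nonempty {j : Fin (M + 1) // j ≠ 0} := ⟨⟨⟨1, by omega⟩, by simp [Fin.ext_iff]⟩⟩
  have heq : hfun a = fun π => Finset.univ.inf' Finset.univ_nonempty
      (fun k : {j : Fin (M + 1) // j ≠ 0} => hj a (k : Fin (M + 1)) π) := by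
    funext π
    rw [Finset.inf'_univ_eq_ciInf]
    rfl
  rw [heq]
  exact Continuous.finset_inf'_apply _ fun i _ => continuous_hj a _

lemma hfun_concave_comb {M : ℕ} (hM : 0 < M) (a : Fin (M + 1) → Fin (M + 1) → ℝ)
    (x y : Fin (M + 1) → ℝ) {s t : ℝ} (hs : 0 ≤ s) (ht : 0 ≤ t) :
    s * hfun a x + t * hfun a y ≤ hfun a (s • x + t • y) := by
  haveI : Nonempty {j : Fin (M + 1) // j ≠ 0} := ⟨⟨⟨1, by omega⟩, by simp [Fin.ext_iff]⟩⟩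
  apply le_ciInf
  intro k
  have := hj_affine a (k : Fin (M + 1)) x y s t
  rw [show hj a (k : Fin (M + 1)) (s • x + t • y) = _ from this]
  gcongr
  · exact hfun_le hM a k.2 x
  · exact hfun_le hM a k.2 y

lemma gamma_closed {M : ℕ} (hM : 0 < M) (a : Fin (M + 1) → Fin (M + 1) → ℝ)
    (j : Fin (M + 1)) (F : (Fin (M + 1) → ℝ) → ℝ)
    (hcont : ContinuousOn F (stdSimplex ℝ (Fin (M + 1)))) :
    IsClosed {π ∈ stdSimplex ℝ (Fin (M + 1)) | F π = hj a j π ∧ hj a j π = hfun a π} := by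
  have h1 : IsClosed (stdSimplex ℝ (Fin (M + 1)) ∩
      (fun π => F π - hj a j π) ⁻¹' {0}) :=
    ContinuousOn.preimage_isClosed_of_isClosed
      (hcont.sub (continuous_hj a j).continuousOn)
      (isClosed_stdSimplex _ _) isClosed_singleton
  have h2 : IsClosed {π : Fin (M + 1) → ℝ | hj a j π = hfun a π} :=
    isClosed_eq (continuous_hj a j) (continuous_hfun hM a)
  have : {π ∈ stdSimplex ℝ (Fin (M + 1)) | F π = hj a j π ∧ hj a j π = hfun a π}
      = (stdSimplex ℝ (Fin (M + 1)) ∩ (fun π => F π - hj a j π) ⁻¹' {0}) ∩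
        {π : Fin (M + 1) → ℝ | hj a j π = hfun a π} := by
    ext π
    simp only [Set.mem_setOf_eq, Set.mem_inter_iff, Set.mem_preimage,
      Set.mem_singleton_iff, sub_eq_zero]
    tauto
  rw [this]
  exact h1.inter h2

lemma gamma_convex {M : ℕ} (hM : 0 < M) (a : Fin (M + 1) → Fin (M + 1) → ℝ)
    {j : Fin (M + 1)} (hjne : j ≠ 0) (F : (Fin (M + 1) → ℝ) → ℝ)
    (hconc : ConcaveOn ℝ (stdSimplex ℝ (Fin (M + 1))) F)
    (hFle : ∀ π ∈ stdSimplex ℝ (Fin (M + 1)), F π ≤ hfun a π) :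
    Convex ℝ {π ∈ stdSimplex ℝ (Fin (M + 1)) | F π = hj a j π ∧ hj a j π = hfun a π} := by
  rintro x ⟨hxS, hx1, hx2⟩ y ⟨hyS, hy1, hy2⟩ s t hs ht hst
  have hzS : s • x + t • y ∈ stdSimplex ℝ (Fin (M + 1)) :=
    (convex_stdSimplex ℝ (Fin (M + 1))) hxS hyS hs ht hst
  have haff := hj_affine a j x y s t
  have hF : s * F x + t * F y ≤ F (s • x + t • y) := hconc.2 hxS hyS hs ht hst
  have hle1 : F (s • x + t • y) ≤ hfun a (s • x + t • y) := hFle _ hzS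
  have hle2 : hfun a (s • x + t • y) ≤ hj a j (s • x + t • y) := hfun_le hM a hjne _
  have hcomb : s * hfun a x + t * hfun a y ≤ hfun a (s • x + t • y) :=
    hfun_concave_comb hM a x y hs ht
  have key : hj a j (s • x + t • y) = s * F x + t * F y := by
    rw [haff, hx1, hy1]
  refine ⟨hzS, ?_, ?_⟩
  · exact le_antisymm (hle1.trans hle2) (key ▸ hF)
  · refine le_antisymm ?_ hle2
    calc hj a j (s • x + t • y) = s * hfun a x + t * hfun a y := by
          rw [haff, hx2, hy2]
      _ ≤ hfun a (s • x + t • y) := hcomb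

/-- each `Γ^{(j)} = {π ∈ S^M : V₀(π) = h_j(π) = h(π)}` is closed and
convex, and `Γ^{(j)} = ∩_{N≥1} Γ_N^{(j)}` where the
`Γ_N^{(j)} = {π ∈ S^M : V₀^N(π) = h_j(π) = h(π)}` form a decreasing sequence of
closed convex sets. -/
theorem stopping_sets_closed_convex
    {M : ℕ} (hM : 0 < M) (c : ℝ) (hc : 0 < c)
    (a : Fin (M + 1) → Fin (M + 1) → ℝ)
    (ha : ∀ (i j : Fin (M + 1)), j ≠ 0 → 0 ≤ a i j)
    (haii : ∀ j : Fin (M + 1), j ≠ 0 → a j j = 0)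
    (V0N : ℕ → (Fin (M + 1) → ℝ) → ℝ) (V0 : (Fin (M + 1) → ℝ) → ℝ)
    (hV0Ncont : ∀ N, ContinuousOn (V0N N) (stdSimplex ℝ (Fin (M + 1))))
    (hV0Nconc : ∀ N, ConcaveOn ℝ (stdSimplex ℝ (Fin (M + 1))) (V0N N))
    (hV0cont : ContinuousOn V0 (stdSimplex ℝ (Fin (M + 1))))
    (hV0conc : ConcaveOn ℝ (stdSimplex ℝ (Fin (M + 1))) V0)
    (hanti : ∀ (N N' : ℕ), N ≤ N' →
      ∀ π ∈ stdSimplex ℝ (Fin (M + 1)), V0N N' π ≤ V0N N π)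
    (hlim : ∀ π ∈ stdSimplex ℝ (Fin (M + 1)),
      Tendsto (fun N : ℕ => V0N N π) atTop (nhds (V0 π)))
    (hle : ∀ N, ∀ π ∈ stdSimplex ℝ (Fin (M + 1)),
      V0 π ≤ V0N N π ∧ V0N N π ≤ hfun a π) :
    ∀ j : Fin (M + 1), j ≠ 0 →
      IsClosed {π ∈ stdSimplex ℝ (Fin (M + 1)) |
          V0 π = hj a j π ∧ hj a j π = hfun a π} ∧
      Convex ℝ {π ∈ stdSimplex ℝ (Fin (M + 1)) |
          V0 π = hj a j π ∧ hj a j π = hfun a π} ∧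
      (∀ N : ℕ,
        IsClosed {π ∈ stdSimplex ℝ (Fin (M + 1)) |
            V0N N π = hj a j π ∧ hj a j π = hfun a π} ∧
        Convex ℝ {π ∈ stdSimplex ℝ (Fin (M + 1)) |
            V0N N π = hj a j π ∧ hj a j π = hfun a π}) ∧
      (∀ (N N' : ℕ), N ≤ N' →
        {π ∈ stdSimplex ℝ (Fin (M + 1)) |
            V0N N' π = hj a j π ∧ hj a j π = hfun a π}
          ⊆ {π ∈ stdSimplex ℝ (Fin (M + 1)) |
              V0N N π = hj a j π ∧ hj a j π = hfun a π}) ∧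
      {π ∈ stdSimplex ℝ (Fin (M + 1)) | V0 π = hj a j π ∧ hj a j π = hfun a π}
        = ⋂ N ∈ {N : ℕ | 1 ≤ N},
            {π ∈ stdSimplex ℝ (Fin (M + 1)) |
              V0N N π = hj a j π ∧ hj a j π = hfun a π} := by
  intro j hjne
  have hV0le : ∀ π ∈ stdSimplex ℝ (Fin (M + 1)), V0 π ≤ hfun a π := fun π hπ =>
    (hle 0 π hπ).1.trans (hle 0 π hπ).2
  refine ⟨gamma_closed hM a j V0 hV0cont,
    gamma_convex hM a hjne V0 hV0conc hV0le,
    fun N => ⟨gamma_closed hM a j (V0N N) (hV0Ncont N),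
      gamma_convex hM a hjne (V0N N) (hV0Nconc N) (fun π hπ => (hle N π hπ).2)⟩,
    ?_, ?_⟩
  · rintro N N' hNN' π ⟨hπS, h1, h2⟩
    refine ⟨hπS, le_antisymm ?_ ?_, h2⟩
    · exact (hle N π hπS).2.trans (h2 ▸ le_refl _)
    · calc hj a j π = V0N N' π := h1.symm
        _ ≤ V0N N π := hanti N N' hNN' π hπS
  · ext π
    simp only [Set.mem_setOf_eq, Set.mem_iInter]
    constructor
    · rintro ⟨hπS, h1, h2⟩ N _
      refine ⟨hπS, le_antisymm ((hle N π hπS).2.trans (h2 ▸ le_refl _)) ?_, h2⟩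
      calc hj a j π = V0 π := h1.symm
        _ ≤ V0N N π := (hle N π hπS).1
    · intro h
      obtain ⟨hπS, h1, h2⟩ := h 1 (le_refl 1)
      refine ⟨hπS, ?_, h2⟩
      have hev : (fun N : ℕ => V0N N π) =ᶠ[atTop] (fun _ => hj a j π) := by
        filter_upwards [eventually_ge_atTop 1] with N hN
        exact (h N hN).2.1
      exact tendsto_nhds_unique (hlim π hπS) (Tendsto.congr' hev.symm tendsto_const_nhds)
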